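/- Let α : V × V → Λ be a symmetric bilinear map satisfying ⟨α(X,Y),w⟩ = −(X,Y) for all X,Y ∈ V, with associated bilinear map β flat, and suppose S(β) is degenerate with v ∈ U₀ light-like, ⟨v,w⟩ = −1, and S(β) ∩ S(β)^⊥ = span{(v,0),(0,v)}. Then β(X,Y) = β₁(X,Y) + 2((X,Y)v, (X,JY)v) for all X,Y ∈ V. -/

import Mathlib

open Module

/-- The decomposition β(X,Y) = β₁(X,Y) + 2((X,Y)v, (X,JY)v), where β₁ is the
component of β in L^⊥ ⊕ L^⊥ with L = span{v,w}. -/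
theorem stmt_7
    (n p : ℕ) (hn : 1 ≤ n) (hp : 2 ≤ p)
    {V : Type} [AddCommGroup V] [Module ℝ V] [FiniteDimensional ℝ V]
    (hV : finrank ℝ V = 2 * n)
    (J : V →ₗ[ℝ] V) (hJ : ∀ X, J (J X) = -X)
    {Λ : Type} [AddCommGroup Λ] [Module ℝ Λ] [FiniteDimensional ℝ Λ]
    (hΛ : finrank ℝ Λ = p)
    (ip : LinearMap.BilinForm ℝ Λ) (hipsymm : ∀ ξ η, ip ξ η = ip η ξ)
    (e : Basis (Fin p) ℝ Λ)
    (he : ∀ i j, ip (e i) (e j) =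
      if i = j then (if (i : ℕ) = 0 then (-1 : ℝ) else 1) else 0)
    (g : LinearMap.BilinForm ℝ V) (hgsymm : ∀ X Y, g X Y = g Y X)
    (hgpos : ∀ X : V, X ≠ 0 → 0 < g X X)
    (hgJ : ∀ X Y, g (J X) (J Y) = g X Y)
    (α : V →ₗ[ℝ] V →ₗ[ℝ] Λ) (hαsymm : ∀ X Y, α X Y = α Y X)
    (w : Λ) (hw0 : w ≠ 0) (hww : ip w w = 0)
    (hαw : ∀ X Y, ip (α X Y) w = - g X Y)
    (bW : LinearMap.BilinForm ℝ (Λ × Λ))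
    (hbW : ∀ ξ η, bW ξ η = ip ξ.1 η.1 - ip ξ.2 η.2)
    (β : V → V → Λ × Λ)
    (hβ : ∀ X Y, β X Y = (α X Y + α (J X) (J Y), α X (J Y) - α (J X) Y))
    (hflat : ∀ X Y Z T, bW (β X Y) (β Z T) = bW (β X T) (β Z Y))
    (Sβ : Submodule ℝ (Λ × Λ))
    (hSβ : Sβ = Submodule.span ℝ {z : Λ × Λ | ∃ X Y, z = β X Y})
    (U₀ : Submodule ℝ Λ)
    (hU₀ : U₀ = Submodule.map (LinearMap.fst ℝ Λ Λ) Sβ)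
    (v : Λ) (hvU₀ : v ∈ U₀) (hv0 : v ≠ 0) (hvv : ip v v = 0) (hvw : ip v w = -1)
    (hrad : Sβ ⊓ bW.orthogonal Sβ =
      Submodule.span ℝ {((v, 0) : Λ × Λ), ((0, v) : Λ × Λ)})
    (L : Submodule ℝ Λ) (hL : L = Submodule.span ℝ {v, w})
    (proj : Λ →ₗ[ℝ] Λ)
    (hproj₁ : ∀ ξ : Λ, proj ξ ∈ ip.orthogonal L)
    (hproj₂ : ∀ ξ : Λ, ξ - proj ξ ∈ L)
    (β₁ : V → V → Λ × Λ)
    (hβ₁ : ∀ X Y, β₁ X Y = (proj (β X Y).1, proj (β X Y).2)) :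
    ∀ X Y : V, β X Y = β₁ X Y + ((2 * g X Y) • v, (2 * g X (J Y)) • v) := by
  intro X Y
  have hvL : v ∈ L := by rw [hL]; exact Submodule.subset_span (by left; rfl)
  have hwL : w ∈ L := by rw [hL]; exact Submodule.subset_span (by right; rfl)
  have hβmem : β X Y ∈ Sβ := by
    rw [hSβ]; exact Submodule.subset_span ⟨X, Y, rfl⟩
  have hv0mem : ((v, 0) : Λ × Λ) ∈ bW.orthogonal Sβ := by
    have h : ((v, 0) : Λ × Λ) ∈ Sβ ⊓ bW.orthogonal Sβ := by
      rw [hrad]; exact Submodule.subset_span (by left; rfl)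
    exact h.2
  have h0vmem : ((0, v) : Λ × Λ) ∈ bW.orthogonal Sβ := by
    have h : ((0, v) : Λ × Λ) ∈ Sβ ⊓ bW.orthogonal Sβ := by
      rw [hrad]; exact Submodule.subset_span (by right; rfl)
    exact h.2
  have h1v : ip (β X Y).1 v = 0 := by
    have h := hv0mem _ hβmem
    change bW _ _ = 0 at h; rw [hbW] at h
    simpa using h
  have h2v : ip (β X Y).2 v = 0 := by
    have h := h0vmem _ hβmem
    change bW _ _ = 0 at h; rw [hbW] at h
    simp only [map_zero, LinearMap.zero_apply] at h
    linarith [h]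
  have hJXY : ∀ A B : V, g (J A) B = - g A (J B) := by
    intro A B
    have h := hgJ (J A) B
    rw [hJ] at h
    rw [← h]; simp
  have h1w : ip (β X Y).1 w = -(2 * g X Y) := by
    rw [hβ]
    simp only [map_add, LinearMap.add_apply, hαw, hgJ]
    ring
  have h2w : ip (β X Y).2 w = -(2 * g X (J Y)) := by
    rw [hβ]
    simp only [map_sub, LinearMap.sub_apply, hαw, hJXY]
    ring
  have key : ∀ (ξ : Λ) (c : ℝ), ip ξ v = 0 → ip ξ w = -c → ξ = proj ξ + c • v := by
    intro ξ c h1 h2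
    have hmem : ξ - proj ξ ∈ Submodule.span ℝ ({v, w} : Set Λ) := by
      rw [← hL]; exact hproj₂ ξ
    obtain ⟨c₁, c₂, hc⟩ := Submodule.mem_span_pair.mp hmem
    have hpv : ip (proj ξ) v = 0 := by
      rw [hipsymm]; exact hproj₁ ξ v hvL
    have hpw : ip (proj ξ) w = 0 := by
      rw [hipsymm]; exact hproj₁ ξ w hwL
    have hwv : ip w v = -1 := by rw [hipsymm]; exact hvw
    have ew : ip (ξ - proj ξ) w = -c := by
      simp only [map_sub, LinearMap.sub_apply, hpw, h2]; ring
    have ev : ip (ξ - proj ξ) v = 0 := by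
      simp only [map_sub, LinearMap.sub_apply, hpv, h1]; ring
    rw [← hc] at ew ev
    simp only [map_add, map_smul, LinearMap.add_apply, LinearMap.smul_apply,
      smul_eq_mul, hvv, hvw, hww, hwv] at ew ev
    have hc₁ : c₁ = c := by linarith
    have hc₂ : c₂ = 0 := by linarith
    rw [hc₁, hc₂] at hc
    simp only [zero_smul, add_zero] at hc
    rw [hc]; abel
  have k1 := key (β X Y).1 (2 * g X Y) h1v h1w
  have k2 := key (β X Y).2 (2 * g X (J Y)) h2v h2w
  rw [hβ₁]
  ext
  · simpa using k1
  · simpa using k2
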